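/- Let G be a finite simple graph, let k, ℓ be natural numbers, and let X, Y be disjoint vertex sets of G such that every neighbor of a vertex of Y lies in X (N(Y) ⊆ X) and such that |N(X′) ∩ Y| ≥ |X′| + ℓ for every non-empty subset X′ ⊆ X. Then G has a vertex set S with |S| ≤ k such that G − S has at most ℓ edges if and only if the graph G − (X ∪ Y) has a vertex set S′ with |S′| ≤ k − |X| such that (G − (X ∪ Y)) − S′ has at most ℓ edges. -/

import Mathlib

/-- The graph obtained from `G` by deleting the vertices in `S`. -/
def SimpleGraph.delVerts {V : Type*} (G : SimpleGraph V) (S : Set V) : SimpleGraph V where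
  Adj a b := G.Adj a b ∧ a ∉ S ∧ b ∉ S
  symm := ⟨fun _ _ h => ⟨h.1.symm, h.2.2, h.2.1⟩⟩
  loopless := ⟨fun a h => G.loopless.irrefl a h.1⟩

lemma delVerts_adj {V : Type*} (G : SimpleGraph V) (S : Set V) (a b : V) :
    (G.delVerts S).Adj a b ↔ G.Adj a b ∧ a ∉ S ∧ b ∉ S := Iff.rfl

lemma edge_ncard_mono {V : Type*} [Fintype V] {G H : SimpleGraph V} (h : G ≤ H) :
    G.edgeSet.ncard ≤ H.edgeSet.ncard :=
  Set.ncard_le_ncard (SimpleGraph.edgeSet_mono h) (Set.toFinite _)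

/-- Safeness of removing an `ℓ`-additive expansion from `X` into `Y` (where `N(Y) ⊆ X` and
`|N(X') ∩ Y| ≥ |X'| + ℓ` for every non-empty `X' ⊆ X`):
`G` has a set `S` of at most `k` vertices whose deletion leaves at most `ℓ` edges
iff `G - (X ∪ Y)` has such a set `S'` of at most `k - |X|` vertices. -/
theorem additive_expansion_rule_safe {V : Type*} [Fintype V] [DecidableEq V]
    (G : SimpleGraph V) [DecidableRel G.Adj] (k ℓ : ℕ) (X Y : Finset V) (hXY : Disjoint X Y)
    (hNY : ∀ y ∈ Y, ∀ v : V, G.Adj y v → v ∈ X)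
    (hexp : ∀ X' ⊆ X, X'.Nonempty →
      X'.card + ℓ ≤ (Y.filter (fun y => ∃ x ∈ X', G.Adj x y)).card) :
    (∃ S : Finset V, S.card ≤ k ∧ (G.delVerts ↑S).edgeSet.ncard ≤ ℓ) ↔
    (∃ S' : Finset V, Disjoint S' (X ∪ Y) ∧ (S'.card : ℤ) ≤ (k : ℤ) - X.card ∧
      ((G.delVerts ↑(X ∪ Y)).delVerts ↑S').edgeSet.ncard ≤ ℓ) := by
  constructor
  · rintro ⟨S, hSk, hSe⟩
    -- key counting: |X \ S| ≤ |S ∩ Y|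
    have key : (X \ S).card ≤ (S ∩ Y).card := by
      rcases (X \ S).eq_empty_or_nonempty with h0 | h0
      · simp [h0]
      · set T : Finset V := Y.filter (fun y => ∃ x ∈ X \ S, G.Adj x y) with hT
        have hexp' : (X \ S).card + ℓ ≤ T.card := hexp _ (Finset.sdiff_subset) h0
        -- injection from T \ S into edges of G - S
        have hinj : (T \ S).card ≤ (G.delVerts ↑S).edgeSet.ncard := by
          classical
          set f : V → Sym2 V := fun y =>
            if h : ∃ x ∈ X \ S, G.Adj x y then s(h.choose, y) else s(y, y) with hf
          have hmem : ∀ y ∈ (↑(T \ S) : Set V), f y ∈ (G.delVerts ↑S).edgeSet := by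
            intro y hy
            simp only [Finset.coe_sdiff, Set.mem_diff, Finset.mem_coe] at hy
            have hyT := hy.1
            rw [hT, Finset.mem_filter] at hyT
            have hex := hyT.2
            simp only [hf, dif_pos hex]
            obtain ⟨hx1, hx2⟩ := hex.choose_spec
            rw [SimpleGraph.mem_edgeSet, delVerts_adj]
            exact ⟨hx2, by simpa using (Finset.mem_sdiff.mp hx1).2, by simpa using hy.2⟩
          have hio : Set.InjOn f (↑(T \ S) : Set V) := by
            intro y₁ hy₁ y₂ hy₂ heq
            simp only [Finset.coe_sdiff, Set.mem_diff, Finset.mem_coe] at hy₁ hy₂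
            have h1 := hy₁.1; have h2 := hy₂.1
            rw [hT, Finset.mem_filter] at h1 h2
            have he1 := h1.2; have he2 := h2.2
            simp only [hf, dif_pos he1, dif_pos he2] at heq
            rw [Sym2.eq_iff] at heq
            rcases heq with ⟨_, h⟩ | ⟨hxy, hyx⟩
            · exact h
            · exfalso
              have hx2 : he2.choose ∈ X := (Finset.mem_sdiff.mp he2.choose_spec.1).1
              rw [← hyx] at hx2
              exact (Finset.disjoint_left.mp hXY) hx2 h1.1
          calc (T \ S).card = (↑(T \ S) : Set V).ncard := (Set.ncard_coe_finset _).symm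
            _ ≤ (G.delVerts ↑S).edgeSet.ncard :=
              Set.ncard_le_ncard_of_injOn f hmem hio (Set.toFinite _)
        have hTS : T.card ≤ (T \ S).card + (S ∩ Y).card := by
          have := Finset.card_sdiff_add_card_inter T S
          have hsub : T ∩ S ⊆ S ∩ Y := by
            intro a ha
            rw [Finset.mem_inter] at ha ⊢
            exact ⟨ha.2, (Finset.mem_filter.mp ha.1).1⟩
          have := Finset.card_le_card hsub
          omega
        omega
    refine ⟨S \ (X ∪ Y), Finset.sdiff_disjoint, ?_, ?_⟩
    · have h1 := Finset.card_sdiff_add_card_inter S (X ∪ Y)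
      have h2 : S ∩ (X ∪ Y) = (S ∩ X) ∪ (S ∩ Y) := Finset.inter_union_distrib_left ..
      have h3 : (S ∩ (X ∪ Y)).card = (S ∩ X).card + (S ∩ Y).card := by
        rw [h2, Finset.card_union_of_disjoint]
        exact Finset.disjoint_of_subset_left Finset.inter_subset_right
          (Finset.disjoint_of_subset_right Finset.inter_subset_right hXY)
      have h4 := Finset.card_sdiff_add_card_inter X S
      have h5 : (X ∩ S).card = (S ∩ X).card := by rw [Finset.inter_comm]
      have h6 : (S \ (X ∪ Y)).card + X.card ≤ k := by omega
      omega
    · refine le_trans (edge_ncard_mono ?_) hSe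
      intro a b hab
      rw [delVerts_adj] at hab
      obtain ⟨hab', ha, hb⟩ := hab
      rw [delVerts_adj] at hab'
      obtain ⟨hGab, ha', hb'⟩ := hab'
      refine ⟨hGab, ?_, ?_⟩
      · intro haS
        by_cases h : a ∈ X ∪ Y
        · exact ha' (by simpa using h)
        · refine ha ?_
          simp only [Finset.coe_sdiff, Set.mem_diff, Finset.mem_coe]
          exact ⟨haS, by simpa using h⟩
      · intro hbS
        by_cases h : b ∈ X ∪ Y
        · exact hb' (by simpa using h)
        · refine hb ?_
          simp only [Finset.coe_sdiff, Set.mem_diff, Finset.mem_coe]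
          exact ⟨hbS, by simpa using h⟩
  · rintro ⟨S', hdisj, hcard, hedge⟩
    refine ⟨S' ∪ X, ?_, ?_⟩
    · have h1 : (S' ∪ X).card ≤ S'.card + X.card := Finset.card_union_le _ _
      have h2 : (S'.card : ℤ) + X.card ≤ k := by omega
      have h1' : ((S' ∪ X).card : ℤ) ≤ (S'.card : ℤ) + X.card := by exact_mod_cast h1
      exact_mod_cast le_trans h1' h2
    · refine le_trans (edge_ncard_mono ?_) hedge
      intro a b hab
      rw [delVerts_adj] at hab
      obtain ⟨hGab, ha, hb⟩ := hab
      simp only [Finset.coe_union, Set.mem_union, Finset.mem_coe, not_or] at ha hb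
      have haY : a ∉ Y := fun haY => hb.2 (hNY a haY b hGab)
      have hbY : b ∉ Y := fun hbY => ha.2 (hNY b hbY a hGab.symm)
      refine ⟨⟨hGab, ?_, ?_⟩, ?_, ?_⟩ <;>
        simp only [Finset.coe_union, Set.mem_union, Finset.mem_coe, not_or] <;>
        tauto
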